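/- Let G be a connected P5-free chordal bipartite graph with bipartition (A,B) and maximum biclique (A1,B1). Let A2 = A \ A1. For any two distinct vertices x_i, x_j in A2, if deg(x_i) ≤ deg(x_j) then N(x_i) ⊆ N(x_j). -/

import Mathlib

open SimpleGraph Finset

variable {V : Type*}

/-- `(A, B)` is a bipartition of the graph `G`. -/
def IsBipartitionOf (G : SimpleGraph V) (A B : Finset V) : Prop :=
  Disjoint A B ∧ (∀ v : V, v ∈ A ∨ v ∈ B) ∧
    ∀ ⦃x y : V⦄, G.Adj x y → (x ∈ A ∧ y ∈ B) ∨ (x ∈ B ∧ y ∈ A)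

/-- `G` has no induced path on `n` vertices. -/
def PFree (n : ℕ) (G : SimpleGraph V) : Prop :=
  ∀ f : Fin n → V, Function.Injective f →
    ¬ (∀ i j : Fin n, G.Adj (f i) (f j) ↔ ((i : ℕ) + 1 = (j : ℕ) ∨ (j : ℕ) + 1 = (i : ℕ)))

/-- Every cycle of length at least 6 has a chord. -/
def ChordalBipartite (G : SimpleGraph V) : Prop :=
  ∀ (v : V) (c : G.Walk v v), c.IsCycle → 6 ≤ c.length →
    ∃ x y : V, x ∈ c.support ∧ y ∈ c.support ∧ G.Adj x y ∧ s(x, y) ∉ c.edges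

/-- `(A1, B1)` is a maximal biclique of `G` within the bipartition `(A, B)`:
it is a complete bipartite subgraph and no vertex can be added to either side. -/
def IsMaximalBiclique (G : SimpleGraph V) (A B A1 B1 : Finset V) : Prop :=
  A1 ⊆ A ∧ B1 ⊆ B ∧ (∀ x ∈ A1, ∀ y ∈ B1, G.Adj x y) ∧
    (∀ x ∈ A, (∀ y ∈ B1, G.Adj x y) → x ∈ A1) ∧
    (∀ y ∈ B, (∀ x ∈ A1, G.Adj x y) → y ∈ B1)

/-- In a bipartition, an edge goes between the parts, so ends of an edge
lie in `A` iff the other one does not. -/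
lemma bip_adj_iff [DecidableEq V] {G : SimpleGraph V} {A B : Finset V}
    (hbip : IsBipartitionOf G A B) {u w : V} (h : G.Adj u w) :
    (u ∈ A ↔ ¬ w ∈ A) := by
  obtain ⟨hd, htot, hadj⟩ := hbip
  have hdl := Finset.disjoint_left.mp hd
  have hdr := Finset.disjoint_right.mp hd
  rcases hadj h with ⟨h1, h2⟩ | ⟨h1, h2⟩
  · exact ⟨fun _ => hdr h2, fun _ => h1⟩
  · exact ⟨fun hu => (hdl hu h1).elim, fun hw => (hw h2).elim⟩

/-- Two vertices on the same side of a bipartition are non-adjacent. -/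
lemma bip_nonadj [DecidableEq V] {G : SimpleGraph V} {A B : Finset V}
    (hbip : IsBipartitionOf G A B) {u w : V} (hu : u ∈ A ↔ w ∈ A) :
    ¬ G.Adj u w := fun h => by
  have := bip_adj_iff hbip h
  tauto

/-- Parity of the length of a walk in a bipartite graph. -/
lemma bip_walk_parity [DecidableEq V] {G : SimpleGraph V} {A B : Finset V}
    (hbip : IsBipartitionOf G A B) :
    ∀ {u v : V} (p : G.Walk u v), ((u ∈ A) ↔ (v ∈ A)) ↔ Even p.length := by
  intro u v p
  induction p with
  | nil => simp
  | @cons u w v h q ih =>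
    have h1 := bip_adj_iff hbip h
    simp only [SimpleGraph.Walk.length_cons, Nat.even_add_one, ← ih]
    tauto

/-- A walk splits at its `n`-th vertex. -/
lemma walk_split {G : SimpleGraph V} :
    ∀ {u v : V} (p : G.Walk u v) (n : ℕ), n ≤ p.length →
      ∃ (q : G.Walk u (p.getVert n)) (r : G.Walk (p.getVert n) v),
        q.length = n ∧ r.length = p.length - n := by
  intro u v p
  induction p with
  | nil =>
    intro n hn
    have hn0 : n = 0 := by simpa using hn
    subst hn0
    exact ⟨SimpleGraph.Walk.nil, SimpleGraph.Walk.nil, rfl, rfl⟩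
  | @cons u w v h q ih =>
    intro n hn
    match n with
    | 0 =>
      exact ⟨SimpleGraph.Walk.nil, (SimpleGraph.Walk.cons h q).copy
        (SimpleGraph.Walk.getVert_zero _).symm rfl, rfl, by simp⟩
    | (m + 1) =>
      simp only [SimpleGraph.Walk.length_cons, Nat.add_le_add_iff_right] at hn
      obtain ⟨q1, r1, hq1, hr1⟩ := ih m hn
      refine ⟨(SimpleGraph.Walk.cons h q1).copy rfl
        (SimpleGraph.Walk.getVert_cons_succ _ h).symm,
        r1.copy (SimpleGraph.Walk.getVert_cons_succ _ h).symm rfl, ?_, ?_⟩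
      · simp [hq1]
      · simp [hr1]

/-- On a shortest walk, the distance from the start to the `i`-th vertex is `i`. -/
lemma shortest_walk_dist {G : SimpleGraph V} (hconn : G.Connected)
    {u v : V} (p : G.Walk u v) (hp : p.length = G.dist u v)
    {i : ℕ} (hi : i ≤ p.length) : G.dist u (p.getVert i) = i := by
  obtain ⟨q, r, hq, hr⟩ := walk_split p i hi
  have h1 : G.dist u (p.getVert i) ≤ i := by
    have := SimpleGraph.dist_le q; rwa [hq] at this
  have h2 : G.dist (p.getVert i) v ≤ p.length - i := by
    have := SimpleGraph.dist_le r; rwa [hr] at this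
  have h3 := hconn.dist_triangle (u := u) (v := p.getVert i) (w := v)
  omega

/-- Two vertices on the same side of a bipartition of a connected `P5`-free
graph have a common neighbor. -/
lemma common_neighbor [DecidableEq V] {G : SimpleGraph V} {A B : Finset V}
    (hconn : G.Connected) (hbip : IsBipartitionOf G A B) (hp5 : PFree 5 G)
    {x y : V} (hxA : x ∈ A) (hyA : y ∈ A) (hxy : x ≠ y) :
    ∃ w : V, G.Adj x w ∧ G.Adj y w := by
  obtain ⟨p, hp⟩ := (hconn x y).exists_walk_length_eq_dist
  have hpos : 0 < p.length := hp ▸ hconn.pos_dist_of_ne hxy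
  have heven : Even p.length := (bip_walk_parity hbip p).mp (by tauto)
  rcases Nat.lt_or_ge p.length 4 with hlt | hge
  · -- length is 2
    have h2 : p.length = 2 := by
      rcases heven with ⟨k, hk⟩; omega
    refine ⟨p.getVert 1, ?_, ?_⟩
    · have := p.adj_getVert_succ (i := 0) (by omega)
      simpa [p.getVert_zero] using this
    · have := p.adj_getVert_succ (i := 1) (by omega)
      rw [show (1 : ℕ) + 1 = p.length by omega, p.getVert_length] at this
      exact this.symm
  · -- length ≥ 4 : the first five vertices form an induced P5, contradiction
    exfalso
    set f : Fin 5 → V := fun i => p.getVert i with hf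
    have hdist : ∀ i : Fin 5, G.dist x (f i) = (i : ℕ) := fun i =>
      shortest_walk_dist hconn p hp (by omega)
    have finj : Function.Injective f := by
      intro i j hij
      have hn : ((i : ℕ) : ℕ) = (j : ℕ) := by
        rw [← hdist i, ← hdist j, hij]
      exact Fin.ext hn
    have hnonadj : ∀ i j : Fin 5, (i : ℕ) + 2 ≤ (j : ℕ) → ¬ G.Adj (f i) (f j) := by
      intro i j hij hadj
      have h1 : G.dist (f i) (f j) ≤ 1 :=
        SimpleGraph.dist_le (SimpleGraph.Walk.cons hadj SimpleGraph.Walk.nil)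
      have h2 := hconn.dist_triangle (u := x) (v := f i) (w := f j)
      have h3 := hdist i
      have h4 := hdist j
      omega
    apply hp5 f finj
    intro i j
    constructor
    · intro hadj
      by_contra hne
      push_neg at hne
      rcases Nat.lt_trichotomy (i : ℕ) (j : ℕ) with hlt' | heq | hgt
      · exact hnonadj i j (by omega) hadj
      · have hij2 : i = j := Fin.ext heq
        rw [hij2] at hadj
        exact G.irrefl hadj
      · exact hnonadj j i (by omega) hadj.symm
    · rintro (h | h)
      · have := p.adj_getVert_succ (i := (i : ℕ)) (by omega)
        rw [h] at this
        exact this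
      · have := p.adj_getVert_succ (i := (j : ℕ)) (by omega)
        rw [h] at this
        exact this.symm

theorem stmt2 [Fintype V] [DecidableEq V] (G : SimpleGraph V) [DecidableRel G.Adj]
    (A B A1 B1 : Finset V)
    (hconn : G.Connected) (hbip : IsBipartitionOf G A B)
    (hcb : ChordalBipartite G) (hp5 : PFree 5 G)
    (hmax : IsMaximalBiclique G A B A1 B1)
    {x y : V} (hx : x ∈ A \ A1) (hy : y ∈ A \ A1) (hxy : x ≠ y)
    (hdeg : G.degree x ≤ G.degree y) :
    G.neighborFinset x ⊆ G.neighborFinset y := by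
  have hxA : x ∈ A := (Finset.mem_sdiff.mp hx).1
  have hyA : y ∈ A := (Finset.mem_sdiff.mp hy).1
  intro u hu
  by_contra huy
  rw [SimpleGraph.mem_neighborFinset] at hu huy
  -- hu : G.Adj x u, huy : ¬ G.Adj y u
  have hsub : G.neighborFinset y ⊆ G.neighborFinset x := by
    intro v hv
    by_contra hvx
    rw [SimpleGraph.mem_neighborFinset] at hv hvx
    -- hv : G.Adj y v, hvx : ¬ G.Adj x v
    obtain ⟨w, hxw, hyw⟩ := common_neighbor hconn hbip hp5 hxA hyA hxy
    -- side information
    have huA : ¬ u ∈ A := (bip_adj_iff hbip hu).mp hxA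
    have hwA : ¬ w ∈ A := (bip_adj_iff hbip hxw).mp hxA
    have hvA : ¬ v ∈ A := (bip_adj_iff hbip hv).mp hyA
    -- distinctness
    have huw : u ≠ w := fun h => huy (h ▸ hyw)
    have huv : u ≠ v := fun h => huy (h ▸ hv)
    have hwv : w ≠ v := fun h => hvx (h ▸ hxw)
    have hux : u ≠ x := fun h => huA (h ▸ hxA)
    have huy' : u ≠ y := fun h => huA (h ▸ hyA)
    have hwx : w ≠ x := fun h => hwA (h ▸ hxA)
    have hwy : w ≠ y := fun h => hwA (h ▸ hyA)
    have hvx' : v ≠ x := fun h => hvA (h ▸ hxA)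
    have hvy : v ≠ y := fun h => hvA (h ▸ hyA)
    -- non-adjacencies within sides
    have nxy : ¬ G.Adj x y := bip_nonadj hbip (by tauto)
    have nuw : ¬ G.Adj u w := bip_nonadj hbip (by tauto)
    have nuv : ¬ G.Adj u v := bip_nonadj hbip (by tauto)
    have nwv : ¬ G.Adj w v := bip_nonadj hbip (by tauto)
    set f : Fin 5 → V := ![u, x, w, y, v] with hf
    have finj : Function.Injective f := by
      intro i j hij
      fin_cases i <;> fin_cases j <;> simp_all [hf] <;>
        first
          | rfl
          | (exact absurd hij (by tauto))
          | (exact absurd hij.symm (by tauto))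
    apply hp5 f finj
    intro i j
    fin_cases i <;> fin_cases j <;>
      simp only [hf, Matrix.cons_val_zero, Matrix.cons_val_one, Matrix.head_cons,
        Matrix.cons_val_two, Matrix.tail_cons, Matrix.cons_val_three,
        Matrix.cons_val_four, Fin.isValue, Fin.val_zero, Fin.val_one, Fin.val_two] <;>
      norm_num <;>
      first
        | exact hu.symm
        | exact hu
        | exact hxw
        | exact hxw.symm
        | exact hyw
        | exact hyw.symm
        | exact hv
        | exact hv.symm
        | exact G.irrefl
        | exact nxy
        | exact fun h => nxy h.symm
        | exact nuw
        | exact fun h => nuw h.symm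
        | exact nuv
        | exact fun h => nuv h.symm
        | exact nwv
        | exact fun h => nwv h.symm
        | exact huy
        | exact fun h => huy h.symm
        | exact hvx
        | exact fun h => hvx h.symm
  -- now a cardinality contradiction
  have hss : G.neighborFinset y ⊂ G.neighborFinset x :=
    ⟨hsub, fun h => huy (by
      have h1 : u ∈ G.neighborFinset x := by
        rw [SimpleGraph.mem_neighborFinset]; exact hu
      have h2 := h h1
      rwa [SimpleGraph.mem_neighborFinset] at h2)⟩
  have := Finset.card_lt_card hss
  simp only [SimpleGraph.card_neighborFinset_eq_degree] at this
  omega
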